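/- For every p ∈ (0,1), the counterexample predictor M̃_p is (0,0)-CCA: for every prompt x ∈ {a,b,⊥}*, either M̃_p({s1}, x) credits s1 with probability 1, or the conditional distribution of M̃_p({s1}, x) given s1 not credited equals the distribution M̃_p(∅, x). -/

import Mathlib

open scoped ENNReal Classical

noncomputable section

namespace CCA

variable {α X D Y : Type*}

/-- Conditional probability of an event `E` given event `B`, for a set function `P`. -/
def prCond (P : Set α → ℝ≥0∞) (B : Set α) : Set α → ℝ≥0∞ := fun E => P (E ∩ B) / P B

/-- `(ε,δ)`-closeness of two set functions, as in differential privacy. -/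
def Close (ε δ : ℝ) (P Q : Set α → ℝ≥0∞) : Prop :=
  ∀ E : Set α,
    P E ≤ ENNReal.ofReal (Real.exp ε) * Q E + ENNReal.ofReal δ ∧
    Q E ≤ ENNReal.ofReal (Real.exp ε) * P E + ENNReal.ofReal δ

/-- `(ε,δ)`-counterfactual credit attribution for a kernel `K` mapping a dataset `S` and a
prompt `x` to a (sub)probability set function over (output, credit set) pairs: for every
prompt, dataset and `s ∈ S`, either `s` is credited with probability `1`, or the conditional
distribution given `s` not credited is `(ε,δ)`-close to the counterfactual on `S \ {s}`. -/
def IsCCA (ε δ : ℝ) (K : Set D → List X → Set (Y × Set D) → ℝ≥0∞) : Prop :=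
  ∀ (S : Set D) (x : List X) (s : D), s ∈ S →
    K S x {q | s ∈ q.2} = 1 ∨
    Close ε δ (prCond (K S x) {q | s ∉ q.2}) (K (S \ {s}) x)

/-- The event kernel associated with a PMF-valued crediting algorithm. -/
def pmfKernel (M : Set D → List X → PMF (Y × Set D)) :
    Set D → List X → Set (Y × Set D) → ℝ≥0∞ :=
  fun S x E => (M S x).toOuterMeasure E

/-- Coin flip: `true` with probability `min p 1`. -/
def coin (p : ℝ≥0∞) : PMF Bool := PMF.bernoulli (min p 1).toNNReal
  (by simpa using ENNReal.toNNReal_mono ENNReal.one_ne_top (min_le_right p 1))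

/-- Two-point distribution: `x` with probability `p` (clipped at `1`), else `y`. -/
def twoPoint (p : ℝ≥0∞) (x y : α) : PMF α := PMF.map (fun b => if b then x else y) (coin p)

/-- The token alphabet `{a, b, ⊥}` of the counterexample predictor. -/
inductive Tok : Type
  | a : Tok
  | b : Tok
  | bot : Tok
deriving DecidableEq

/-- The counterexample crediting next-token predictor `M̃_p`, over the data universe
`Unit = {s1}` (datasets and credit sets are `Set Unit`, with `{()} = {s1}`). -/
def Mp (p : ℝ) (S : Set Unit) (x : List Tok) : PMF (Tok × Set Unit) :=
  if x = [] then twoPoint (ENNReal.ofReal p) (Tok.a, (∅ : Set Unit)) (Tok.b, ∅)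
  else if x = [Tok.a] then
    if S = ∅ then PMF.pure (Tok.b, ∅)
    else twoPoint (1 / 2) (Tok.a, Set.univ) (Tok.b, ∅)
  else if x = [Tok.b] then
    if S = ∅ then PMF.pure (Tok.a, ∅) else PMF.pure (Tok.a, Set.univ)
  else PMF.pure (Tok.bot, ∅)

/-- Measure of an event under `twoPoint`. -/
lemma twoPoint_meas (q : ℝ≥0∞) (x y : α) (E : Set α) :
    (twoPoint q x y).toOuterMeasure E =
      (if x ∈ E then min q 1 else 0) + (if y ∈ E then 1 - min q 1 else 0) := by
  rw [twoPoint, PMF.toOuterMeasure_map_apply, PMF.toOuterMeasure_apply, tsum_bool]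
  have hc : (((min q 1).toNNReal : NNReal) : ℝ≥0∞) = min q 1 :=
    ENNReal.coe_toNNReal (ne_top_of_le_ne_top ENNReal.one_ne_top (min_le_right _ _))
  have hb : ∀ b, coin q b = cond b (min q 1) (1 - min q 1) := by
    intro b; unfold coin; erw [PMF.bernoulli_apply]
    cases b <;> simp [hc, ENNReal.coe_sub]
  simp [Set.indicator, hb, add_comm]

lemma twoPoint_support_subset (q : ℝ≥0∞) (x y : α) :
    (twoPoint q x y).support ⊆ {x, y} := by
  rw [twoPoint, PMF.support_map]
  rintro a ⟨b, -, rfl⟩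
  cases b <;> simp

/-- If the support avoids the complement event, conditioning is trivial. -/
lemma prCond_of_support_subset (P : PMF α) (B : Set α) (h : P.support ⊆ B) (E : Set α) :
    prCond (fun E => P.toOuterMeasure E) B E = P.toOuterMeasure E := by
  have hB : P.toOuterMeasure B = 1 := (PMF.toOuterMeasure_apply_eq_one_iff P B).2 h
  have h1 : P.toOuterMeasure (E ∩ B) = P.toOuterMeasure E := by
    refine le_antisymm (P.toOuterMeasure.mono Set.inter_subset_left) ?_
    calc P.toOuterMeasure E = P.toOuterMeasure (E ∩ P.support) :=
          (PMF.toOuterMeasure_apply_inter_support P E).symm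
      _ ≤ P.toOuterMeasure (E ∩ B) :=
          P.toOuterMeasure.mono (Set.inter_subset_inter_right E h)
  simp [prCond, h1, hB]

lemma key (p : ℝ) (x : List Tok) :
    (Mp p {()} x).toOuterMeasure {q : Tok × Set Unit | () ∈ q.2} = 1 ∨
    ∀ E : Set (Tok × Set Unit),
      prCond (pmfKernel (Mp p) {()} x) {q | () ∉ q.2} E =
        (Mp p ∅ x).toOuterMeasure E := by
  have hne : ({()} : Set Unit) ≠ ∅ := by simp
  by_cases h0 : x = []
  · right
    intro E
    have : Mp p {()} x = Mp p ∅ x := by simp [Mp, h0]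
    have hker : pmfKernel (Mp p) {()} x = fun E => (Mp p ∅ x).toOuterMeasure E := by
      funext E; simp only [pmfKernel, this]
    rw [hker]
    refine prCond_of_support_subset _ _ ?_ E
    intro q hq
    have := twoPoint_support_subset (ENNReal.ofReal p) (Tok.a, (∅ : Set Unit)) (Tok.b, ∅)
      (by simpa [Mp, h0] using hq)
    rcases this with h | h <;> subst h <;> simp
  by_cases ha : x = [Tok.a]
  · right
    intro E
    have hS : Mp p {()} x = twoPoint (1 / 2) (Tok.a, Set.univ) (Tok.b, ∅) := by
      simp [Mp, ha, hne]
    have hE : Mp p ∅ x = PMF.pure (Tok.b, (∅ : Set Unit)) := by simp [Mp, ha]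
    have hker : pmfKernel (Mp p) {()} x = fun E => (Mp p {()} x).toOuterMeasure E := rfl
    rw [hker]
    simp only [hS, hE, prCond, twoPoint_meas, PMF.toOuterMeasure_pure_apply]
    have hmin : min (1 / 2 : ℝ≥0∞) 1 = 1 / 2 := by
      exact min_eq_left (by simpa using ENNReal.half_le_self (a := 1))
    have hsub : (1 : ℝ≥0∞) - 1 / 2 = 1 / 2 := by
      rw [one_div, ENNReal.one_sub_inv_two]
    have hB : ((Tok.a, Set.univ) ∈ ({q : Tok × Set Unit | () ∉ q.2} : Set (Tok × Set Unit)))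
        = False := by simp
    have hB2 : ((Tok.b, (∅ : Set Unit)) ∈ ({q : Tok × Set Unit | () ∉ q.2} : Set (Tok × Set Unit))) := by simp
    simp only [hmin, hsub, Set.mem_inter_iff, hB2, and_true, Set.mem_setOf_eq,
      Set.mem_univ, not_true_eq_false, and_false, if_false, zero_add]
    by_cases hbE : (Tok.b, (∅ : Set Unit)) ∈ E
    · simp [hbE, ENNReal.div_self]
    · simp [hbE]
  by_cases hb : x = [Tok.b]
  · left
    have hS : Mp p {()} x = PMF.pure (Tok.a, (Set.univ : Set Unit)) := by
      simp [Mp, h0, ha, hb, hne]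
    rw [hS, PMF.toOuterMeasure_pure_apply]
    simp
  · right
    intro E
    have : Mp p {()} x = Mp p ∅ x := by simp [Mp, h0, ha, hb]
    have hker : pmfKernel (Mp p) {()} x = fun E => (Mp p ∅ x).toOuterMeasure E := by
      funext E; simp only [pmfKernel, this]
    rw [hker]
    refine prCond_of_support_subset _ _ ?_ E
    intro q hq
    have : q = (Tok.bot, ∅) := by
      have hsupp : (Mp p ∅ x).support = {(Tok.bot, (∅ : Set Unit))} := by
        simp [Mp, h0, ha, hb]
      simpa [hsupp] using hq
    subst this; simp

/-- The counterexample predictor `M̃_p` is `(0,0)`-CCA: for every prompt, it either credits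
`s1` with probability `1`, or the conditional distribution given `s1` not credited equals
the counterfactual distribution `M̃_p(∅, x)`. -/
theorem stmt1 (p : ℝ) (hp0 : 0 < p) (hp1 : p < 1) :
    IsCCA 0 0 (pmfKernel (Mp p)) ∧
    ∀ x : List Tok,
      (Mp p {()} x).toOuterMeasure {q : Tok × Set Unit | () ∈ q.2} = 1 ∨
      ∀ E : Set (Tok × Set Unit),
        prCond (pmfKernel (Mp p) {()} x) {q | () ∉ q.2} E =
          (Mp p ∅ x).toOuterMeasure E := by
  refine ⟨?_, key p⟩
  intro S x s hs
  have hsu : s = () := rfl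
  have hS : S = {()} := by
    ext u; cases u; simpa [hsu] using hs
  have hD : S \ {s} = (∅ : Set Unit) := by
    ext u; cases u; simp [hsu]
  subst hS
  rw [hsu, hD]
  rcases key p x with h | h
  · left; exact h
  · right
    intro E
    have := h E
    constructor <;> simp [this, pmfKernel]

end CCA
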